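/- Let n be a finite index type and A a complex n×n matrix. Let z ∈ ℂ with Re(z) > ‖A‖, where ‖A‖ denotes the operator norm of A (acting on the Euclidean space ℂⁿ). Then trace((z·I - A)⁻¹) equals the integral over t ∈ [0, ∞) of e^{-z t} · trace(exp(t·A)), where exp denotes the matrix exponential. -/

import Mathlib

open MeasureTheory
open scoped Matrix.Norms.L2Operator

section Aux
open NormedSpace

lemma aux_norm_exp_le {𝔸 : Type*} [NormedRing 𝔸] [NormedAlgebra ℝ 𝔸] [CompleteSpace 𝔸]
    (x : 𝔸) : ‖exp x‖ ≤ max ‖(1 : 𝔸)‖ 1 * Real.exp ‖x‖ := by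
  set C := max ‖(1 : 𝔸)‖ 1 with hC
  have hC1 : (1 : ℝ) ≤ C := le_max_right _ _
  have hterm : ∀ m : ℕ, ‖((m.factorial : ℝ))⁻¹ • x ^ m‖ ≤
      C * (((m.factorial : ℝ))⁻¹ * ‖x‖ ^ m) := by
    intro m
    have hpow : ‖x ^ m‖ ≤ C * ‖x‖ ^ m := by
      rcases Nat.eq_zero_or_pos m with hm | hm
      · subst hm
        simp only [pow_zero, hC]
        exact (le_max_left ‖(1 : 𝔸)‖ 1).trans (by nlinarith)
      · calc ‖x ^ m‖ ≤ ‖x‖ ^ m := norm_pow_le' x hm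
          _ ≤ C * ‖x‖ ^ m := by nlinarith [pow_nonneg (norm_nonneg x) m]
    rw [norm_smul, norm_inv, Real.norm_natCast]
    calc ((m.factorial : ℝ))⁻¹ * ‖x ^ m‖ ≤ ((m.factorial : ℝ))⁻¹ * (C * ‖x‖ ^ m) := by
          gcongr
      _ = C * (((m.factorial : ℝ))⁻¹ * ‖x‖ ^ m) := by ring
  have hs : Summable fun m : ℕ => ((m.factorial : ℝ))⁻¹ * ‖x‖ ^ m := by
    simpa [div_eq_inv_mul] using Real.summable_pow_div_factorial ‖x‖
  have hsn : Summable fun m : ℕ => ‖((m.factorial : ℝ))⁻¹ • x ^ m‖ :=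
    norm_expSeries_summable' x
  calc ‖exp x‖ ≤ ∑' m : ℕ, ‖((m.factorial : ℝ))⁻¹ • x ^ m‖ := by
        rw [exp_eq_tsum ℝ]; exact norm_tsum_le_tsum_norm hsn
    _ ≤ ∑' m : ℕ, C * (((m.factorial : ℝ))⁻¹ * ‖x‖ ^ m) := Summable.tsum_le_tsum hterm hsn (hs.mul_left C)
    _ = C * Real.exp ‖x‖ := by
        rw [tsum_mul_left, Real.exp_eq_exp_ℝ, exp_eq_tsum ℝ]
        simp [smul_eq_mul]
end Aux

/-- For a complex square matrix `A` and `z ∈ ℂ` with `Re z > ‖A‖` (operator norm of `A`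
acting on Euclidean space), one has `trace((z·I - A)⁻¹) = ∫₀^∞ e^{-zt} trace(exp(tA)) dt`.
Here `‖·‖` is the L² operator norm on matrices, i.e. the norm of the induced continuous
linear map on `EuclideanSpace ℂ n`, and `exp` is the matrix exponential. -/
theorem trace_resolvent_eq_integral (n : Type*) [Fintype n] [DecidableEq n]
    (A : Matrix n n ℂ) (z : ℂ) (hz : ‖A‖ < z.re) :
    Matrix.trace ((z • (1 : Matrix n n ℂ) - A)⁻¹) =
      ∫ t in Set.Ici (0 : ℝ),
        Complex.exp (-z * t) * Matrix.trace (NormedSpace.exp (t • A)) := by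
  set B : Matrix n n ℂ := z • (1 : Matrix n n ℂ) - A with hB
  set F : ℝ → Matrix n n ℂ :=
    fun t => Complex.exp (-z * t) • NormedSpace.exp (t • A) with hF
  set C : ℝ := max ‖(1 : Matrix n n ℂ)‖ 1 with hCdef
  have hc : (0:ℝ) < z.re - ‖A‖ := by linarith
  have hexp : (NormedSpace.exp : Matrix n n ℂ → Matrix n n ℂ) = NormedSpace.exp :=
    rfl
  -- derivative of F
  have hderiv : ∀ t : ℝ, HasDerivAt F (-(B * F t)) t := by
    intro t
    have h1 : HasDerivAt (fun t : ℝ => NormedSpace.exp (t • A))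
        (A * NormedSpace.exp (t • A)) t := by
      rw [hexp]
      exact hasDerivAt_exp_smul_const' A t
    have h2 : HasDerivAt (fun t : ℝ => Complex.exp (-z * t))
        (-z * Complex.exp (-z * t)) t := by
      have h3 : HasDerivAt (fun w : ℂ => Complex.exp (-z * w))
          (-z * Complex.exp (-z * (t:ℂ))) (t:ℂ) := by
        simpa [mul_comm] using (((hasDerivAt_id ((t:ℝ):ℂ)).const_mul (-z)).cexp)
      exact h3.comp_ofReal
    have h4 := h2.smul h1
    refine h4.congr_deriv (Eq.symm ?_)
    have h7 : (-z * Complex.exp (-z * t)) = -(Complex.exp (-z * t) * z) := by ring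
    rw [h7, neg_smul, ← sub_eq_add_neg]
    simp only [hB, sub_mul, Matrix.one_mul, Matrix.smul_mul]
    rw [Matrix.mul_smul, neg_sub]
    congr 1
    show z • (Complex.exp (-z * t) • NormedSpace.exp (t • A)) = _
    rw [smul_smul, mul_comm]
  -- norm bound
  have hbound : ∀ t : ℝ, 0 ≤ t → ‖F t‖ ≤ C * Real.exp (-(z.re - ‖A‖) * t) := by
    intro t ht
    rw [hF]
    simp only [norm_smul, Complex.norm_exp]
    have h1 : (-z * (t:ℂ)).re = -(z.re * t) := by simp
    rw [h1]
    have h2 : ‖NormedSpace.exp (t • A)‖ ≤ C * Real.exp (t * ‖A‖) := by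
      rw [hexp]
      refine (aux_norm_exp_le (t • A)).trans ?_
      rw [norm_smul, Real.norm_eq_abs, abs_of_nonneg ht]
    calc Real.exp (-(z.re * t)) * ‖NormedSpace.exp (t • A)‖
        ≤ Real.exp (-(z.re * t)) * (C * Real.exp (t * ‖A‖)) := by
          gcongr
      _ = C * Real.exp (-(z.re - ‖A‖) * t) := by
          rw [mul_comm (Real.exp (-(z.re * t))), mul_assoc, ← Real.exp_add]
          congr 2
          ring
  -- continuity of F
  have hFc : Continuous F := by
    apply Continuous.fun_smul
    · exact Complex.continuous_exp.comp (continuous_const.mul Complex.continuous_ofReal)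
    · exact continuous_iff_continuousAt.2 fun t => (hasDerivAt_exp_smul_const' A t).continuousAt
  -- integrability of F on Ioi 0
  have hFi : IntegrableOn F (Set.Ioi (0:ℝ)) := by
    refine Integrable.mono' ((exp_neg_integrableOn_Ioi 0 hc).const_mul C) ?_ ?_
    · exact hFc.aestronglyMeasurable.restrict
    · filter_upwards [ae_restrict_mem measurableSet_Ioi] with t ht
      exact hbound t (le_of_lt ht)
  -- integrability of the derivative
  have hF'i : IntegrableOn (fun t => -(B * F t)) (Set.Ioi (0:ℝ)) :=
    (hFi.const_mul B).neg
  -- tendsto 0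
  have htend : Filter.Tendsto F Filter.atTop (nhds (0 : Matrix n n ℂ)) := by
    refine squeeze_zero_norm' (a := fun t => C * Real.exp (-(z.re - ‖A‖) * t)) ?_ ?_
    · filter_upwards [Filter.eventually_ge_atTop (0:ℝ)] with t ht
      exact hbound t ht
    · have h8 : Filter.Tendsto (fun t : ℝ => -(z.re - ‖A‖) * t) Filter.atTop Filter.atBot := by
        apply Filter.Tendsto.const_mul_atTop_of_neg (by linarith) Filter.tendsto_id
      have h9 := (Real.tendsto_exp_atBot.comp h8).const_mul C
      simpa using h9
  -- FTC
  have hFTC : ∫ t in Set.Ioi (0:ℝ), -(B * F t) = 0 - F 0 :=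
    integral_Ioi_of_hasDerivAt_of_tendsto' (fun t _ => hderiv t) hF'i htend
  have hF0 : F 0 = 1 := by
    simp [hF, NormedSpace.exp_zero]
  have h5 : ∫ t in Set.Ioi (0:ℝ), B * F t = 1 := by
    rw [integral_neg, hF0, zero_sub, neg_inj] at hFTC
    exact hFTC
  have hint : B * ∫ t in Set.Ioi (0:ℝ), F t = 1 := by
    rw [← h5]
    exact (ContinuousLinearMap.integral_comp_comm
      (ContinuousLinearMap.mul ℂ (Matrix n n ℂ) B) hFi).symm
  have hinv : B⁻¹ = ∫ t in Set.Ioi (0:ℝ), F t := Matrix.inv_eq_right_inv hint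
  let T : Matrix n n ℂ →L[ℂ] ℂ :=
    LinearMap.toContinuousLinearMap (Matrix.traceLinearMap n ℂ ℂ)
  calc Matrix.trace B⁻¹ = T (∫ t in Set.Ioi (0:ℝ), F t) := by rw [hinv]; rfl
    _ = ∫ t in Set.Ioi (0:ℝ), T (F t) := (T.integral_comp_comm hFi).symm
    _ = ∫ t in Set.Ici (0:ℝ),
          Complex.exp (-z * t) * Matrix.trace (NormedSpace.exp (t • A)) := by
        rw [integral_Ici_eq_integral_Ioi]
        refine setIntegral_congr_fun measurableSet_Ioi fun t ht => ?_
        show Matrix.trace (F t) = _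
        rw [hF]
        simp [Matrix.trace_smul, smul_eq_mul]
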